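/- In a finite Büchi game with n positions, every winning strategy of Player 0 from v that is absorption-dominant from v is uniquely determined by its restriction to the nodes of the tree unraveling of depth at most n; consequently, the number of absorption-dominant winning strategies from v is finite. -/

import Mathlib

/-- A Büchi game: positions `V` partitioned into Player 0's positions `V0` and
Player 1's positions `V1`, edge relation `E` with every position having a
successor, and target set `F`. -/
structure BuchiGame (V : Type*) where
  V0 : Set V
  V1 : Set V
  E : V → V → Prop
  F : Set V
  cover : ∀ v, v ∈ V0 ∨ v ∈ V1
  disjoint : ∀ v, ¬(v ∈ V0 ∧ v ∈ V1)
  nonempty_succ : ∀ v, ∃ w, E v w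

/-- A strategy of Player 0 from `v0`, represented as a subtree of the tree
unraveling of the game: a set of finite paths from `v0` which is prefix-closed,
has a unique chosen successor at nodes ending in Player 0 positions, and all
successors at nodes ending in Player 1 positions. -/
structure BuchiStrategy {V : Type*} (G : BuchiGame V) (v0 : V) where
  tree : Set (List V)
  root_mem : [v0] ∈ tree
  isPath : ∀ ρ ∈ tree, ρ.head? = some v0 ∧ List.Chain' G.E ρ
  prefix_closed : ∀ (ρ : List V) (v : V), ρ ≠ [] → ρ ++ [v] ∈ tree → ρ ∈ tree
  choice0 : ∀ (ρ : List V) (v : V), ρ ++ [v] ∈ tree → v ∈ G.V0 →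
    ∃! w : V, ρ ++ [v, w] ∈ tree
  choice1 : ∀ (ρ : List V) (v : V), ρ ++ [v] ∈ tree → v ∈ G.V1 →
    ∀ w : V, G.E v w → ρ ++ [v, w] ∈ tree

namespace BuchiStrategy

variable {V : Type*} {G : BuchiGame V} {v0 : V}

/-- The number of occurrences (in `ℕ∞`) of the edge `e` in the strategy tree. -/
noncomputable def edgeCount (S : BuchiStrategy G v0) (e : V × V) : ℕ∞ :=
  {ρ : List V | ρ ++ [e.1, e.2] ∈ S.tree}.encard

/-- `S₁` absorbs `S₂`: every edge occurs in `S₁` at most as often as in `S₂`. -/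
def Absorbs (S₁ S₂ : BuchiStrategy G v0) : Prop :=
  ∀ e : V × V, S₁.edgeCount e ≤ S₂.edgeCount e

/-- `S₁` strictly absorbs `S₂`. -/
def StrictlyAbsorbs (S₁ S₂ : BuchiStrategy G v0) : Prop :=
  Absorbs S₁ S₂ ∧ ∃ e : V × V, S₁.edgeCount e < S₂.edgeCount e

/-- A strategy is absorption-dominant from `v0` if no strategy strictly absorbs it. -/
def AbsorptionDominant (S : BuchiStrategy G v0) : Prop :=
  ∀ S' : BuchiStrategy G v0, ¬ StrictlyAbsorbs S' S

/-- A strategy is positional if all occurrences of any Player 0 position have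
the same chosen successor. -/
def Positional (S : BuchiStrategy G v0) : Prop :=
  ∀ v ∈ G.V0, ∀ (ρ ρ' : List V) (w w' : V),
    ρ ++ [v, w] ∈ S.tree → ρ' ++ [v, w'] ∈ S.tree → w = w'

/-- An infinite play consistent with the strategy: all finite prefixes lie in
the strategy tree. -/
def ConsistentPlay (S : BuchiStrategy G v0) (f : ℕ → V) : Prop :=
  ∀ n : ℕ, (List.range (n + 1)).map f ∈ S.tree

/-- A strategy is winning if every consistent play visits `F` infinitely often. -/
def Winning (S : BuchiStrategy G v0) : Prop :=
  ∀ f : ℕ → V, S.ConsistentPlay f → ∀ n : ℕ, ∃ m : ℕ, n ≤ m ∧ f m ∈ G.F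

end BuchiStrategy

section Aux

open BuchiStrategy

variable {V : Type*} {G : BuchiGame V} {v0 : V}

/-! ### list helpers -/

lemma snoc_inj {α : Type*} {l m : List α} {a b : α} (h : l ++ [a] = m ++ [b]) :
    l = m ∧ a = b := by
  have := List.append_inj' h rfl
  exact ⟨this.1, by simpa using this.2⟩

lemma prefix_snoc_iff {α : Type*} {l m : List α} {a : α} :
    l <+: m ++ [a] ↔ l = m ++ [a] ∨ l <+: m := by
  constructor
  · rintro ⟨t, ht⟩
    rcases t.eq_nil_or_concat' with rfl | ⟨t', b, rfl⟩
    · left; simpa using ht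
    · right
      have h2 : (l ++ t') ++ [b] = m ++ [a] := by
        simpa [List.append_assoc] using ht
      exact ⟨t', (snoc_inj h2).1⟩
  · rintro (rfl | h)
    · exact List.prefix_rfl
    · exact h.trans (List.prefix_append _ _)

lemma head?_of_prefix {α : Type*} {l m : List α} (hl : l ≠ []) (h : l <+: m) :
    m.head? = l.head? := by
  obtain ⟨t, rfl⟩ := h
  exact List.head?_append_of_ne_nil _ hl

lemma prefix_length_lt {α : Type*} {l m : List α} (h : l <+: m) (hne : l ≠ m) :
    l.length < m.length :=
  lt_of_le_of_ne h.length_le (fun hl => hne (List.IsPrefix.eq_of_length h hl))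

lemma snoc_eq_of_getLast? {α : Type*} {l : List α} {a : α} (h : l.getLast? = some a) :
    l.dropLast ++ [a] = l := by
  have hne : l ≠ [] := by rintro rfl; simp at h
  rw [List.getLast?_eq_getLast hne, Option.some_inj] at h
  rw [← h]
  exact List.dropLast_append_getLast hne

/-! ### basic strategy tree lemmas -/

lemma tree_ne_nil (S : BuchiStrategy G v0) {ρ : List V} (h : ρ ∈ S.tree) : ρ ≠ [] := by
  rintro rfl
  simpa using (S.isPath _ h).1

lemma mem_of_prefix (S : BuchiStrategy G v0) {χ ρ : List V} (hp : χ <+: ρ) (hχ : χ ≠ [])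
    (hρ : ρ ∈ S.tree) : χ ∈ S.tree := by
  obtain ⟨t, rfl⟩ := hp
  induction t using List.reverseRecOn with
  | nil => simpa using hρ
  | append_singleton t a ih =>
    have : (χ ++ t) ++ [a] ∈ S.tree := by simpa [List.append_assoc] using hρ
    have h2 : χ ++ t ∈ S.tree := S.prefix_closed _ _ (by simp [hχ]) this
    exact ih h2

lemma step_E (S : BuchiStrategy G v0) {m : List V} {u c : V} (h : m ++ [c] ∈ S.tree)
    (hu : m.getLast? = some u) : G.E u c := by
  have hc := (S.isPath _ h).2
  simp only [List.Chain'] at hc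
  rw [List.isChain_append] at hc
  exact hc.2.2 u hu c rfl

lemma mem_snoc_iff_V1 (S : BuchiStrategy G v0) {m : List V} {u : V} (hm : m ∈ S.tree)
    (hu : m.getLast? = some u) (hu1 : u ∈ G.V1) (c : V) :
    m ++ [c] ∈ S.tree ↔ G.E u c := by
  constructor
  · intro h; exact step_E S h hu
  · intro h
    have := S.choice1 m.dropLast u (by rw [snoc_eq_of_getLast? hu]; exact hm) hu1 c h
    rwa [show m.dropLast ++ [u, c] = (m.dropLast ++ [u]) ++ [c] by simp, snoc_eq_of_getLast? hu] at this

lemma exists_unique_snoc_V0 (S : BuchiStrategy G v0) {m : List V} {u : V} (hm : m ∈ S.tree)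
    (hu : m.getLast? = some u) (hu0 : u ∈ G.V0) :
    ∃! w : V, m ++ [w] ∈ S.tree := by
  have := S.choice0 m.dropLast u (by rw [snoc_eq_of_getLast? hu]; exact hm) hu0
  convert this using 2 with w
  rw [show m.dropLast ++ [u, w] = (m.dropLast ++ [u]) ++ [w] by simp, snoc_eq_of_getLast? hu]

end Aux

section Machine

open BuchiStrategy

variable {V : Type*} {G : BuchiGame V} {v0 : V}

variable (J : List V → List V)

/-- auxiliary state function, on reversed lists -/
def sfR : List V → List V
  | [] => []
  | a :: r => J (sfR r ++ [a])

/-- The state function of the jump machine. -/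
def sf (l : List V) : List V := sfR J l.reverse

@[simp] lemma sf_nil : sf J [] = [] := rfl

lemma sf_snoc (h : List V) (a : V) : sf J (h ++ [a]) = J (sf J h ++ [a]) := by
  simp [sf, sfR]

/-- The tree of the jump machine. -/
def mtree (S : BuchiStrategy G v0) : Set (List V) :=
  {ρ | ρ ≠ [] ∧ ρ.head? = some v0 ∧
    ∀ h w, h ≠ [] → h ++ [w] <+: ρ → sf J h ++ [w] ∈ S.tree}

variable {S : BuchiStrategy G v0} {J}

lemma mtree_prefix {χ ρ : List V} (hχ : χ ≠ []) (hp : χ <+: ρ) (hρ : ρ ∈ mtree J S) :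
    χ ∈ mtree J S :=
  ⟨hχ, by rw [← head?_of_prefix hχ hp]; exact hρ.2.1,
    fun h w hh hpre => hρ.2.2 h w hh (hpre.trans hp)⟩

variable (hJT : ∀ s ∈ S.tree, J s ∈ S.tree) (hJL : ∀ s ∈ S.tree, (J s).getLast? = s.getLast?)
include hJT hJL

lemma sf_mem {ρ : List V} (hρ : ρ ∈ mtree J S) :
    sf J ρ ∈ S.tree ∧ (sf J ρ).getLast? = ρ.getLast? := by
  induction ρ using List.reverseRecOn with
  | nil => exact absurd rfl hρ.1
  | append_singleton h a ih =>
    by_cases hh : h = []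
    · subst hh
      have ha : a = v0 := by simpa using hρ.2.1
      have hroot : ([] : List V) ++ [a] ∈ S.tree := by rw [ha]; simpa using S.root_mem
      have hroot' : sf J [] ++ [a] ∈ S.tree := by simpa using hroot
      rw [sf_snoc]
      exact ⟨hJT _ hroot', by rw [hJL _ hroot']; simp⟩
    · have hpre : h ∈ mtree J S := mtree_prefix hh (List.prefix_append _ _) hρ
      have ih' := ih hpre
      have hstep : sf J h ++ [a] ∈ S.tree := hρ.2.2 h a hh List.prefix_rfl
      rw [sf_snoc]
      exact ⟨hJT _ hstep, by rw [hJL _ hstep]; simp⟩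

omit hJT hJL in
lemma mtree_snoc_iff {m : List V} (hm : m ∈ mtree J S) (w : V) :
    m ++ [w] ∈ mtree J S ↔ sf J m ++ [w] ∈ S.tree := by
  constructor
  · intro h
    exact h.2.2 m w hm.1 List.prefix_rfl
  · intro h
    refine ⟨by simp, by rw [List.head?_append_of_ne_nil _ hm.1]; exact hm.2.1, ?_⟩
    intro h' w' hh' hpre
    rcases prefix_snoc_iff.1 hpre with heq | hpre'
    · obtain ⟨rfl, rfl⟩ := snoc_inj heq
      exact h
    · exact hm.2.2 h' w' hh' hpre'

lemma mtree_chain {ρ : List V} (hρ : ρ ∈ mtree J S) : List.Chain' G.E ρ := by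
  induction ρ using List.reverseRecOn with
  | nil => exact List.isChain_nil
  | append_singleton h a ih =>
    by_cases hh : h = []
    · subst hh; simp [List.Chain', List.isChain_singleton]
    · have hpre : h ∈ mtree J S := mtree_prefix hh (List.prefix_append _ _) hρ
      have hstep : sf J h ++ [a] ∈ S.tree := hρ.2.2 h a hh List.prefix_rfl
      have hch := (S.isPath _ hstep).2
      simp only [List.Chain'] at hch ⊢
      rw [List.isChain_append] at hch
      rw [List.isChain_append]
      refine ⟨ih hpre, by simp, ?_⟩
      intro x hx y hy
      apply hch.2.2 x _ y hy
      rw [(sf_mem hJT hJL hpre).2]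
      exact hx

/-- The jump machine strategy. -/
def machine : BuchiStrategy G v0 where
  tree := mtree J S
  root_mem := by
    refine ⟨by simp, rfl, ?_⟩
    intro h w hh hpre
    exfalso
    have h1 := hpre.length_le
    rw [List.length_append] at h1
    simp only [List.length_singleton] at h1
    have h2 : h.length = 0 := by omega
    exact hh (List.length_eq_zero_iff.1 h2)
  isPath := fun ρ hρ => ⟨hρ.2.1, mtree_chain hJT hJL hρ⟩
  prefix_closed := fun ρ w hρne hmem => mtree_prefix hρne (List.prefix_append _ _) hmem
  choice0 := by
    intro ρ u hmem hu
    have hm : ρ ++ [u] ∈ mtree J S := hmem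
    have hs := sf_mem hJT hJL hm
    have hlast : (sf J (ρ ++ [u])).getLast? = some u := by rw [hs.2]; simp
    have h1 := exists_unique_snoc_V0 S hs.1 hlast hu
    have hiff : ∀ w : V, ρ ++ [u, w] ∈ mtree J S ↔ sf J (ρ ++ [u]) ++ [w] ∈ S.tree := by
      intro w
      rw [show ρ ++ [u, w] = (ρ ++ [u]) ++ [w] by simp]
      exact mtree_snoc_iff hm w
    obtain ⟨w, hw, hwu⟩ := h1
    exact ⟨w, (hiff w).2 hw, fun y hy => hwu y ((hiff y).1 hy)⟩
  choice1 := by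
    intro ρ u hmem hu w hE
    have hm : ρ ++ [u] ∈ mtree J S := hmem
    have hs := sf_mem hJT hJL hm
    have hlast : (sf J (ρ ++ [u])).getLast? = some u := by rw [hs.2]; simp
    rw [show ρ ++ [u, w] = (ρ ++ [u]) ++ [w] by simp]
    rw [mtree_snoc_iff hm w]
    exact (mem_snoc_iff_V1 S hs.1 hlast hu w).2 hE

end Machine

section Counting

open BuchiStrategy

variable {V : Type*} {G : BuchiGame V} {v0 : V}
variable {S : BuchiStrategy G v0} {J : List V → List V}

lemma edgeCount_def (S : BuchiStrategy G v0) (e : V × V) :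
    S.edgeCount e = {ρ : List V | ρ ++ [e.1, e.2] ∈ S.tree}.encard := rfl

lemma snoc_snoc (ρ : List V) (a b : V) : (ρ ++ [a]) ++ [b] = ρ ++ [a, b] := by simp

/-- The canonical map from machine edge occurrences to `S` edge occurrences. -/
def psi (J : List V → List V) (e : V × V) (ρ : List V) : List V :=
  (sf J (ρ ++ [e.1])).dropLast

lemma occ_step {e : V × V} {ρ : List V} (h : ρ ++ [e.1, e.2] ∈ mtree J S) :
    sf J (ρ ++ [e.1]) ++ [e.2] ∈ S.tree :=
  h.2.2 (ρ ++ [e.1]) e.2 (by simp) (by rw [snoc_snoc])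

variable (hJT : ∀ s ∈ S.tree, J s ∈ S.tree) (hJL : ∀ s ∈ S.tree, (J s).getLast? = s.getLast?)
include hJT hJL

lemma occ_sf_last {e : V × V} {ρ : List V} (h : ρ ++ [e.1, e.2] ∈ mtree J S) :
    (sf J (ρ ++ [e.1])).getLast? = some e.1 := by
  have hpre : ρ ++ [e.1] ∈ mtree J S :=
    mtree_prefix (by simp) ⟨[e.2], by rw [snoc_snoc]⟩ h
  rw [(sf_mem hJT hJL hpre).2]
  simp

lemma psi_snoc {e : V × V} {ρ : List V} (h : ρ ++ [e.1, e.2] ∈ mtree J S) :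
    psi J e ρ ++ [e.1] = sf J (ρ ++ [e.1]) :=
  snoc_eq_of_getLast? (occ_sf_last hJT hJL h)

lemma psi_occ {e : V × V} {ρ : List V} (h : ρ ++ [e.1, e.2] ∈ mtree J S) :
    psi J e ρ ++ [e.1, e.2] ∈ S.tree := by
  rw [← snoc_snoc, psi_snoc hJT hJL h]
  exact occ_step h

lemma machine_count_le (e : V × V)
    (hinj : Set.InjOn (psi J e) {ρ : List V | ρ ++ [e.1, e.2] ∈ mtree J S}) :
    (machine hJT hJL).edgeCount e ≤ S.edgeCount e := by
  rw [edgeCount_def, edgeCount_def]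
  have h1 : {ρ : List V | ρ ++ [e.1, e.2] ∈ (machine hJT hJL).tree} =
      {ρ : List V | ρ ++ [e.1, e.2] ∈ mtree J S} := rfl
  rw [h1, ← hinj.encard_image]
  apply Set.encard_mono
  rintro x ⟨ρ, hρ, rfl⟩
  exact psi_occ hJT hJL hρ

lemma machine_count_lt (e : V × V)
    (hinj : Set.InjOn (psi J e) {ρ : List V | ρ ++ [e.1, e.2] ∈ mtree J S})
    (hfin : S.edgeCount e ≠ ⊤) {ρ₀ : List V} (hρ₀ : ρ₀ ++ [e.1, e.2] ∈ S.tree)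
    (hmiss : ∀ ρ, ρ ++ [e.1, e.2] ∈ mtree J S → psi J e ρ ≠ ρ₀) :
    (machine hJT hJL).edgeCount e < S.edgeCount e := by
  rw [edgeCount_def, edgeCount_def]
  have h1 : {ρ : List V | ρ ++ [e.1, e.2] ∈ (machine hJT hJL).tree} =
      {ρ : List V | ρ ++ [e.1, e.2] ∈ mtree J S} := rfl
  rw [h1, ← hinj.encard_image]
  have hfin' : {ρ : List V | ρ ++ [e.1, e.2] ∈ S.tree}.Finite := by
    rw [← Set.encard_ne_top_iff]; exact hfin
  apply Set.Finite.encard_lt_encard (Set.Finite.subset hfin' (by rintro x ⟨ρ, hρ, rfl⟩; exact psi_occ hJT hJL hρ))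
  constructor
  · rintro x ⟨ρ, hρ, rfl⟩
    exact psi_occ hJT hJL hρ
  · intro hsub
    have := hsub hρ₀
    obtain ⟨ρ, hρ, heq⟩ := this
    exact hmiss ρ hρ heq

end Counting

section Surgeries

open BuchiStrategy

variable {V : Type*} {G : BuchiGame V} {v0 : V}
variable {S : BuchiStrategy G v0}

/-! ### the skip machine -/

open Classical in
noncomputable def skipJ (π τ : List V) : List V → List V := fun s => if s = π then τ else s

open Classical in
lemma skipJ_pos {π τ s : List V} (h : s = π) : skipJ π τ s = τ := by
  simp only [skipJ, if_pos h]

open Classical in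
lemma skipJ_neg {π τ s : List V} (h : s ≠ π) : skipJ π τ s = s := by
  simp only [skipJ, if_neg h]

lemma sf_skip_of_not_prefix {π τ h : List V} (hnp : ¬ π <+: h) :
    sf (skipJ π τ) h = h := by
  induction h using List.reverseRecOn with
  | nil => simp
  | append_singleton h a ih =>
    have hnp' : ¬ π <+: h := fun hh => hnp (hh.trans (List.prefix_append _ _))
    have hne : h ++ [a] ≠ π := by rintro rfl; exact hnp List.prefix_rfl
    rw [sf_snoc, ih hnp', skipJ_neg hne]

lemma sf_skip_of_prefix {π τ : List V} (hπne : π ≠ []) (hlt : π.length < τ.length)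
    {h : List V} (hp : π <+: h) : sf (skipJ π τ) h = τ ++ h.drop π.length := by
  induction h using List.reverseRecOn with
  | nil =>
    exact absurd (List.prefix_nil.1 hp) hπne
  | append_singleton h a ih =>
    by_cases hcase : π = h ++ [a]
    · have hnp : ¬ π <+: h := by
        intro hh
        have := hh.length_le
        rw [hcase] at this
        simp at this
      rw [sf_snoc, sf_skip_of_not_prefix hnp, skipJ_pos hcase.symm, hcase]
      simp
    · have hp' : π <+: h := by
        rcases prefix_snoc_iff.1 hp with heq | hp'
        · exact absurd heq hcase
        · exact hp'
      have hne2 : τ ++ List.drop π.length h ++ [a] ≠ π := by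
        intro heq
        have := congrArg List.length heq
        simp at this
        omega
      rw [sf_snoc, ih hp', List.append_assoc, skipJ_neg (by rwa [← List.append_assoc]),
        ← List.drop_append_of_le_length hp'.length_le]

lemma skip_inj {π τ : List V} (hπne : π ≠ []) (hπτ : π <+: τ) (hlt : π.length < τ.length)
    {h1 h2 : List V} (he : sf (skipJ π τ) h1 = sf (skipJ π τ) h2) : h1 = h2 := by
  by_cases p1 : π <+: h1 <;> by_cases p2 : π <+: h2
  · rw [sf_skip_of_prefix hπne hlt p1, sf_skip_of_prefix hπne hlt p2] at he
    have hd := List.append_cancel_left he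
    obtain ⟨t1, rfl⟩ := p1
    obtain ⟨t2, rfl⟩ := p2
    rw [List.drop_left, List.drop_left] at hd
    rw [hd]
  · exfalso
    rw [sf_skip_of_prefix hπne hlt p1, sf_skip_of_not_prefix p2] at he
    have : π <+: τ ++ List.drop π.length h1 := hπτ.trans (List.prefix_append _ _)
    rw [he] at this
    exact p2 this
  · exfalso
    rw [sf_skip_of_not_prefix p1, sf_skip_of_prefix hπne hlt p2] at he
    have : π <+: τ ++ List.drop π.length h2 := hπτ.trans (List.prefix_append _ _)
    rw [← he] at this
    exact p1 this
  · rw [sf_skip_of_not_prefix p1, sf_skip_of_not_prefix p2] at he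
    exact he

end Surgeries

section RepeatPair

open BuchiStrategy

variable {V : Type*} {G : BuchiGame V} {v0 : V}
variable {S : BuchiStrategy G v0} {π τ : List V}

variable (hτ : τ ∈ S.tree) (hpre : π <+: τ) (hne : π ≠ τ) (hlast : π.getLast? = τ.getLast?)

include hτ hpre hne hlast

omit hne hpre in
lemma pi_ne_nil (hπ : π = []) : False := by
  subst hπ
  rw [List.getLast?_eq_none_iff.2 rfl] at hlast
  have := tree_ne_nil S hτ
  rw [eq_comm, List.getLast?_eq_none_iff] at hlast
  exact this hlast

omit hpre hne hlast in
lemma skip_hJT : ∀ s ∈ S.tree, skipJ π τ s ∈ S.tree := by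
  intro s hs
  by_cases h : s = π
  · rwa [skipJ_pos h]
  · rwa [skipJ_neg h]

omit hpre hne in
omit hτ in
lemma skip_hJL : ∀ s ∈ S.tree, (skipJ π τ s).getLast? = s.getLast? := by
  intro s hs
  by_cases h : s = π
  · rw [skipJ_pos h, h, ← hlast]
  · rw [skipJ_neg h]

lemma stepA (hdom : S.AbsorptionDominant)
    {ρ₀ : List V} {e : V × V} (hocc : ρ₀ ++ [e.1, e.2] ∈ S.tree)
    (hb : π <+: ρ₀ ++ [e.1]) (hnb : ¬ τ <+: ρ₀ ++ [e.1]) : S.edgeCount e = ⊤ := by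
  by_contra hfin
  have hπne : π ≠ [] := fun h => pi_ne_nil hτ hlast h
  have hlt : π.length < τ.length := prefix_length_lt hpre hne
  have hJT := skip_hJT (π := π) hτ
  have hJL := skip_hJL (S := S) hlast
  have hinj : ∀ e' : V × V, Set.InjOn (psi (skipJ π τ) e')
      {ρ : List V | ρ ++ [e'.1, e'.2] ∈ mtree (skipJ π τ) S} := by
    intro e' ρ1 h1 ρ2 h2 heq
    have hs1 := psi_snoc hJT hJL h1
    have hs2 := psi_snoc hJT hJL h2
    have : sf (skipJ π τ) (ρ1 ++ [e'.1]) = sf (skipJ π τ) (ρ2 ++ [e'.1]) := by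
      rw [← hs1, ← hs2, heq]
    exact (snoc_inj (skip_inj hπne hpre hlt this)).1
  have habs : Absorbs (machine hJT hJL) S := fun e' => machine_count_le hJT hJL e' (hinj e')
  have hmiss : ∀ ρ, ρ ++ [e.1, e.2] ∈ mtree (skipJ π τ) S → psi (skipJ π τ) e ρ ≠ ρ₀ := by
    intro ρ hρ heq
    have hs := psi_snoc hJT hJL hρ
    rw [heq] at hs
    by_cases hp : π <+: ρ ++ [e.1]
    · rw [sf_skip_of_prefix hπne hlt hp] at hs
      exact hnb (by rw [hs]; exact List.prefix_append _ _)
    · rw [sf_skip_of_not_prefix hp] at hs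
      rw [← hs] at hp
      exact hp hb
  have hstrict := machine_count_lt hJT hJL e (hinj e) hfin hocc hmiss
  exact hdom (machine hJT hJL) ⟨habs, e, hstrict⟩

end RepeatPair

section Pump

open BuchiStrategy

variable {V : Type*} {G : BuchiGame V} {v0 : V}
variable {S : BuchiStrategy G v0} {π τ : List V}

lemma pump_ne (hτne : τ ≠ []) (hlt : π.length < τ.length) (r : List V) :
    sf (skipJ τ π) (τ ++ r) ≠ τ ++ r := by
  induction r using List.reverseRecOn with
  | nil =>
    rcases τ.eq_nil_or_concat' with rfl | ⟨d, y, hdy⟩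
    · exact absurd rfl hτne
    · rw [List.append_nil]
      have hstep : sf (skipJ τ π) (d ++ [y]) = skipJ τ π (sf (skipJ τ π) d ++ [y]) :=
        sf_snoc _ _ _
      rw [← hdy] at hstep
      rw [hstep]
      by_cases hc : sf (skipJ τ π) d ++ [y] = τ
      · rw [skipJ_pos hc]
        intro h
        rw [h] at hlt
        omega
      · rw [skipJ_neg hc]
        exact hc
  | append_singleton r a ih =>
    rw [← List.append_assoc, sf_snoc]
    by_cases hc : sf (skipJ τ π) (τ ++ r) ++ [a] = τ
    · rw [skipJ_pos hc]
      intro h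
      have := congrArg List.length h
      simp at this
      omega
    · rw [skipJ_neg hc]
      intro h
      exact ih (snoc_inj h).1

lemma pump_inv1 (h : List V) :
    sf (skipJ τ π) h = h ∨ π <+: sf (skipJ τ π) h := by
  induction h using List.reverseRecOn with
  | nil => left; simp
  | append_singleton h a ih =>
    rw [sf_snoc]
    by_cases hc : sf (skipJ τ π) h ++ [a] = τ
    · right; rw [skipJ_pos hc]
    · rw [skipJ_neg hc]
      rcases ih with hid | hp
      · left; rw [hid]
      · right; exact hp.trans (List.prefix_append _ _)

lemma pump_inv2 (hτne : τ ≠ []) (hlt : π.length < τ.length) (h : List V) :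
    ¬ τ <+: sf (skipJ τ π) h := by
  induction h using List.reverseRecOn with
  | nil =>
    intro hp
    exact hτne (List.prefix_nil.1 (by simpa using hp))
  | append_singleton h a ih =>
    rw [sf_snoc]
    by_cases hc : sf (skipJ τ π) h ++ [a] = τ
    · rw [skipJ_pos hc]
      intro hp
      have := hp.length_le
      omega
    · rw [skipJ_neg hc]
      intro hp
      rcases prefix_snoc_iff.1 hp with heq | hp'
      · exact hc heq.symm
      · exact ih hp'

variable (hτ : τ ∈ S.tree) (hpre : π <+: τ) (hne : π ≠ τ) (hlast : π.getLast? = τ.getLast?)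
include hτ hpre hne hlast

lemma conclusionOne (hdom : S.AbsorptionDominant)
    {ρ₀ : List V} {e : V × V} (hocc : ρ₀ ++ [e.1, e.2] ∈ S.tree)
    (hb : π <+: ρ₀ ++ [e.1]) : S.edgeCount e = ⊤ := by
  by_contra hfin
  have hπne : π ≠ [] := fun h => pi_ne_nil hτ hlast h
  have hτne : τ ≠ [] := tree_ne_nil S hτ
  have hlt : π.length < τ.length := prefix_length_lt hpre hne
  have hπT : π ∈ S.tree := mem_of_prefix S hpre hπne hτ
  have hτb : τ <+: ρ₀ ++ [e.1] := by
    by_contra h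
    exact hfin (stepA hτ hpre hne hlast hdom hocc hb h)
  have hJT : ∀ s ∈ S.tree, skipJ τ π s ∈ S.tree := skip_hJT hπT
  have hJL : ∀ s ∈ S.tree, (skipJ τ π s).getLast? = s.getLast? :=
    skip_hJL (S := S) hlast.symm
  have hid : ∀ (e' : V × V), S.edgeCount e' ≠ ⊤ → ∀ ρ,
      ρ ++ [e'.1, e'.2] ∈ mtree (skipJ τ π) S →
      sf (skipJ τ π) (ρ ++ [e'.1]) = ρ ++ [e'.1] := by
    intro e' hfin' ρ hρ
    rcases pump_inv1 (π := π) (τ := τ) (ρ ++ [e'.1]) with hidc | hπp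
    · exact hidc
    · exfalso
      have hsT : sf (skipJ τ π) (ρ ++ [e'.1]) ++ [e'.2] ∈ S.tree := occ_step hρ
      have hslast : (sf (skipJ τ π) (ρ ++ [e'.1])).getLast? = some e'.1 :=
        occ_sf_last hJT hJL hρ
      have hρ' : (sf (skipJ τ π) (ρ ++ [e'.1])).dropLast ++ [e'.1, e'.2] ∈ S.tree := by
        rw [← snoc_snoc, snoc_eq_of_getLast? hslast]; exact hsT
      have hb' : π <+: (sf (skipJ τ π) (ρ ++ [e'.1])).dropLast ++ [e'.1] := by
        rw [snoc_eq_of_getLast? hslast]; exact hπp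
      by_cases hnb' : τ <+: (sf (skipJ τ π) (ρ ++ [e'.1])).dropLast ++ [e'.1]
      · rw [snoc_eq_of_getLast? hslast] at hnb'
        exact pump_inv2 hτne hlt _ hnb'
      · exact hfin' (stepA hτ hpre hne hlast hdom hρ' hb' hnb')
  have hinjS : ∀ (e' : V × V), S.edgeCount e' ≠ ⊤ → Set.InjOn (psi (skipJ τ π) e')
      {ρ : List V | ρ ++ [e'.1, e'.2] ∈ mtree (skipJ τ π) S} := by
    intro e' hfin' ρ1 h1 ρ2 h2 heq
    have e1 : psi (skipJ τ π) e' ρ1 = ρ1 := by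
      rw [psi, hid e' hfin' ρ1 h1, List.dropLast_concat]
    have e2 : psi (skipJ τ π) e' ρ2 = ρ2 := by
      rw [psi, hid e' hfin' ρ2 h2, List.dropLast_concat]
    rw [e1, e2] at heq
    exact heq
  have habs : Absorbs (machine hJT hJL) S := by
    intro e'
    by_cases hT : S.edgeCount e' = ⊤
    · rw [hT]; exact le_top
    · exact machine_count_le hJT hJL e' (hinjS e' hT)
  have hmiss : ∀ ρ, ρ ++ [e.1, e.2] ∈ mtree (skipJ τ π) S → psi (skipJ τ π) e ρ ≠ ρ₀ := by
    intro ρ hρ heq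
    have e1 : psi (skipJ τ π) e ρ = ρ := by
      rw [psi, hid e hfin ρ hρ, List.dropLast_concat]
    rw [e1] at heq
    subst heq
    obtain ⟨r, hr⟩ := hτb
    have := hid e hfin ρ hρ
    rw [← hr] at this
    exact pump_ne hτne hlt r this
  have hstrict := machine_count_lt hJT hJL e (hinjS e hfin) hfin hocc hmiss
  exact hdom (machine hJT hJL) ⟨habs, e, hstrict⟩

end Pump

section Commit

open BuchiStrategy

variable {V : Type*} {G : BuchiGame V} {v0 : V}
variable {S : BuchiStrategy G v0} {π τ : List V}

open Classical in
noncomputable def commitJ (y : V) (χ : List V) : List V → List V :=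
  fun s => if s.getLast? = some y then χ else s

open Classical in
lemma commitJ_pos {y : V} {χ s : List V} (h : s.getLast? = some y) :
    commitJ y χ s = χ := by
  simp only [commitJ, if_pos h]

open Classical in
lemma commitJ_neg {y : V} {χ s : List V} (h : s.getLast? ≠ some y) :
    commitJ y χ s = s := by
  simp only [commitJ, if_neg h]

lemma commit_inv1 {y : V} {χ : List V} (h : List V) :
    sf (commitJ y χ) h = h ∨ χ <+: sf (commitJ y χ) h := by
  induction h using List.reverseRecOn with
  | nil => left; simp
  | append_singleton h a ih =>
    rw [sf_snoc]
    by_cases hc : (sf (commitJ y χ) h ++ [a]).getLast? = some y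
    · right; rw [commitJ_pos hc]
    · rw [commitJ_neg hc]
      rcases ih with hid | hp
      · left; rw [hid]
      · right; exact hp.trans (List.prefix_append _ _)

variable (hτ : τ ∈ S.tree) (hpre : π <+: τ) (hne : π ≠ τ) (hlast : π.getLast? = τ.getLast?)
include hτ hpre hne hlast

lemma commit_contradiction (hdom : S.AbsorptionDominant)
    {χ : List V} (hχT : χ ∈ S.tree) (hπχ : π <+: χ) {y : V} (hχy : χ.getLast? = some y)
    (hy0 : y ∈ G.V0) {za zb : V} (hza : χ ++ [za] ∈ S.tree)
    {b : List V} (hbT : b ++ [zb] ∈ S.tree) (hby : b.getLast? = some y)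
    (hπb : π <+: b) (hzz : za ≠ zb) : False := by
  have hJT : ∀ s ∈ S.tree, commitJ y χ s ∈ S.tree := by
    intro s hs
    by_cases h : s.getLast? = some y
    · rwa [commitJ_pos h]
    · rwa [commitJ_neg h]
  have hJL : ∀ s ∈ S.tree, (commitJ y χ s).getLast? = s.getLast? := by
    intro s hs
    by_cases h : s.getLast? = some y
    · rw [commitJ_pos h, h, hχy]
    · rw [commitJ_neg h]
  -- the top edge count of the doubled choice
  have htop : S.edgeCount (y, zb) = ⊤ := by
    have hocc : b.dropLast ++ [(y, zb).1, (y, zb).2] ∈ S.tree := by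
      rw [← snoc_snoc, snoc_eq_of_getLast? hby]
      exact hbT
    have hb' : π <+: b.dropLast ++ [(y, zb).1] := by
      rw [snoc_eq_of_getLast? hby]
      exact hπb
    exact conclusionOne hτ hpre hne hlast hdom hocc hb'
  -- identity of the state function on scarce edges
  have hid : ∀ (e' : V × V), S.edgeCount e' ≠ ⊤ → ∀ ρ,
      ρ ++ [e'.1, e'.2] ∈ mtree (commitJ y χ) S →
      sf (commitJ y χ) (ρ ++ [e'.1]) = ρ ++ [e'.1] := by
    intro e' hfin' ρ hρ
    rcases commit_inv1 (y := y) (χ := χ) (ρ ++ [e'.1]) with hidc | hχp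
    · exact hidc
    · exfalso
      have hsT : sf (commitJ y χ) (ρ ++ [e'.1]) ++ [e'.2] ∈ S.tree := occ_step hρ
      have hslast : (sf (commitJ y χ) (ρ ++ [e'.1])).getLast? = some e'.1 :=
        occ_sf_last hJT hJL hρ
      have hρ' : (sf (commitJ y χ) (ρ ++ [e'.1])).dropLast ++ [e'.1, e'.2] ∈ S.tree := by
        rw [← snoc_snoc, snoc_eq_of_getLast? hslast]; exact hsT
      have hb' : π <+: (sf (commitJ y χ) (ρ ++ [e'.1])).dropLast ++ [e'.1] := by
        rw [snoc_eq_of_getLast? hslast]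
        exact hπχ.trans hχp
      exact hfin' (conclusionOne hτ hpre hne hlast hdom hρ' hb')
  have hinjS : ∀ (e' : V × V), S.edgeCount e' ≠ ⊤ → Set.InjOn (psi (commitJ y χ) e')
      {ρ : List V | ρ ++ [e'.1, e'.2] ∈ mtree (commitJ y χ) S} := by
    intro e' hfin' ρ1 h1 ρ2 h2 heq
    have e1 : psi (commitJ y χ) e' ρ1 = ρ1 := by
      rw [psi, hid e' hfin' ρ1 h1, List.dropLast_concat]
    have e2 : psi (commitJ y χ) e' ρ2 = ρ2 := by
      rw [psi, hid e' hfin' ρ2 h2, List.dropLast_concat]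
    rw [e1, e2] at heq
    exact heq
  have habs : Absorbs (machine hJT hJL) S := by
    intro e'
    by_cases hT : S.edgeCount e' = ⊤
    · rw [hT]; exact le_top
    · exact machine_count_le hJT hJL e' (hinjS e' hT)
  -- the machine never plays zb after y
  have hempty : {ρ : List V | ρ ++ [(y, zb).1, (y, zb).2] ∈ mtree (commitJ y χ) S} = ∅ := by
    ext ρ
    simp only [Set.mem_setOf_eq, Set.mem_empty_iff_false, iff_false]
    intro hρ
    have hstep : sf (commitJ y χ) (ρ ++ [y]) ++ [zb] ∈ S.tree := occ_step (e := (y, zb)) hρ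
    have hcond : (sf (commitJ y χ) ρ ++ [y]).getLast? = some y := by simp
    rw [sf_snoc, commitJ_pos hcond] at hstep
    obtain ⟨w, hw, hwU⟩ := exists_unique_snoc_V0 S hχT hχy hy0
    exact hzz ((hwU za hza).trans (hwU zb hstep).symm)
  have hstrict : (machine hJT hJL).edgeCount (y, zb) < S.edgeCount (y, zb) := by
    rw [edgeCount_def, htop]
    have : {ρ : List V | ρ ++ [(y, zb).1, (y, zb).2] ∈ (machine hJT hJL).tree} = ∅ := hempty
    rw [this, Set.encard_empty]
    exact lt_top_iff_ne_top.2 (by simp)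
  exact hdom (machine hJT hJL) ⟨habs, (y, zb), hstrict⟩

end Commit

section SelfSim

open BuchiStrategy

variable {V : Type*} {G : BuchiGame V} {v0 : V}
variable {S : BuchiStrategy G v0} {π τ : List V}

lemma self_similar (hdom : S.AbsorptionDominant)
    (hτ : τ ∈ S.tree) (hpre : π <+: τ) (hne : π ≠ τ) (hlast : π.getLast? = τ.getLast?) :
    ∀ rest : List V, (π ++ rest ∈ S.tree ↔ τ ++ rest ∈ S.tree) := by
  have hπne : π ≠ [] := fun h => pi_ne_nil hτ hlast h
  have hπT : π ∈ S.tree := mem_of_prefix S hpre hπne hτ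
  have main : ∀ n : ℕ, ∀ rest : List V, rest.length ≤ n →
      (π ++ rest ∈ S.tree ↔ τ ++ rest ∈ S.tree) := by
    intro n
    induction n with
    | zero =>
      intro rest h
      rw [List.length_eq_zero_iff.1 (Nat.le_zero.1 h)]
      simpa using iff_of_true hπT hτ
    | succ n ih =>
      intro rest hlen
      rcases rest.eq_nil_or_concat' with rfl | ⟨δ, c, rfl⟩
      · simpa using iff_of_true hπT hτ
      · have hδlen : δ.length ≤ n := by
          rw [List.length_append, List.length_singleton] at hlen
          omega
        have hδ := ih δ hδlen
        rw [← List.append_assoc, ← List.append_assoc]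
        by_cases hδT : π ++ δ ∈ S.tree
        · have hδT' : τ ++ δ ∈ S.tree := hδ.mp hδT
          have hane : π ++ δ ≠ [] := by simp [hπne]
          have hy : (π ++ δ).getLast? = some ((π ++ δ).getLast hane) :=
            List.getLast?_eq_getLast hane
          set y := (π ++ δ).getLast hane with hydef
          have hby : (τ ++ δ).getLast? = some y := by
            rcases δ.eq_nil_or_concat' with rfl | ⟨δ', d, rfl⟩
            · rw [List.append_nil, ← hlast]
              rw [List.append_nil] at hy
              exact hy
            · rw [List.getLast?_append_of_ne_nil _ (by simp)]
              rw [List.getLast?_append_of_ne_nil _ (by simp)] at hy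
              exact hy
          rcases G.cover y with hy0 | hy1
          · obtain ⟨za, hza, hzaU⟩ := exists_unique_snoc_V0 S hδT hy hy0
            obtain ⟨zb, hzb, hzbU⟩ := exists_unique_snoc_V0 S hδT' hby hy0
            by_cases hzz : za = zb
            · constructor
              · intro h
                have hc : c = za := hzaU c h
                rw [hc, hzz]
                exact hzb
              · intro h
                have hc : c = zb := hzbU c h
                rw [hc, ← hzz]
                exact hza
            · exfalso
              exact commit_contradiction hτ hpre hne hlast hdom hδT
                (List.prefix_append _ _) hy hy0 hza hzb hby
                (hpre.trans (List.prefix_append _ _)) hzz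
          · rw [mem_snoc_iff_V1 S hδT hy hy1 c, mem_snoc_iff_V1 S hδT' hby hy1 c]
        · constructor
          · intro h
            exact absurd (S.prefix_closed _ _ (by simp [hπne]) h) hδT
          · intro h
            have : τ ++ δ ∈ S.tree := S.prefix_closed _ _ (by simp [tree_ne_nil S hτ]) h
            exact absurd (hδ.mpr this) hδT
  exact fun rest => main rest.length rest le_rfl

end SelfSim

section Determination

open BuchiStrategy

variable {V : Type*} [Fintype V] {G : BuchiGame V} {v : V}

lemma getLast?_take {ρ : List V} {k : ℕ} (h : k < ρ.length) :
    (ρ.take (k + 1)).getLast? = some ρ[k] := by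
  rw [List.take_succ, List.getElem?_eq_getElem h, Option.toList_some, List.getLast?_concat]

lemma determined_aux (S S' : BuchiStrategy G v)
    (hdom : S.AbsorptionDominant) (hdom' : S'.AbsorptionDominant)
    (hagree : ∀ ρ : List V, ρ.length ≤ Fintype.card V + 1 → (ρ ∈ S.tree ↔ ρ ∈ S'.tree)) :
    ∀ ρ ∈ S.tree, ρ ∈ S'.tree := by
  set n := Fintype.card V with hn
  have main : ∀ L : ℕ, ∀ ρ : List V, ρ.length ≤ L → ρ ∈ S.tree → ρ ∈ S'.tree := by
    intro L
    induction L with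
    | zero =>
      intro ρ hlen hmem
      exact absurd (List.length_eq_zero_iff.1 (Nat.le_zero.1 hlen)) (tree_ne_nil S hmem)
    | succ L ihL =>
      intro ρ hlen hmem
      by_cases hsh : ρ.length ≤ n + 1
      · exact (hagree ρ hsh).1 hmem
      · push_neg at hsh
        have hρlen : n + 2 ≤ ρ.length := hsh
        -- pigeonhole on the first n+1 entries
        have hpig : ∃ i j : ℕ, ∃ (hi : i < ρ.length) (hj : j < ρ.length),
            i < j ∧ j ≤ n ∧ ρ[i] = ρ[j] := by
          have hcard : Fintype.card V < Fintype.card (Fin (n + 1)) := by simp [hn]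
          obtain ⟨a, b, hab, hfab⟩ := Fintype.exists_ne_map_eq_of_card_lt
            (fun k : Fin (n + 1) => ρ[k.val]'(by omega)) hcard
          rcases Nat.lt_trichotomy a.val b.val with h | h | h
          · exact ⟨a.val, b.val, by omega, by omega, h, by omega, hfab⟩
          · exact absurd (Fin.ext h) hab
          · exact ⟨b.val, a.val, by omega, by omega, h, by omega, hfab.symm⟩
        obtain ⟨i, j, hi, hj, hij, hjn, hgetij⟩ := hpig
        set π := ρ.take (i + 1) with hπdef
        set τ := ρ.take (j + 1) with hτdef
        have hπτ : π <+: τ := List.take_prefix_take_left (l := ρ) (by omega)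
        have hπlen : π.length = i + 1 := by
          rw [hπdef, List.length_take]; omega
        have hτlen : τ.length = j + 1 := by
          rw [hτdef, List.length_take]; omega
        have hπτne : π ≠ τ := by
          intro h
          rw [h] at hπlen
          omega
        have hτρ : τ <+: ρ := List.take_prefix _ _
        have hτT : τ ∈ S.tree :=
          mem_of_prefix S hτρ (by intro h; rw [h] at hτlen; simp at hτlen) hmem
        have hlasts : π.getLast? = τ.getLast? := by
          rw [hπdef, hτdef, getLast?_take hi, getLast?_take hj, hgetij]
        have hτT' : τ ∈ S'.tree := (hagree τ (by omega)).1 hτT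
        set rest := ρ.drop (j + 1) with hrest
        have hsplit : τ ++ rest = ρ := List.take_append_drop _ _
        have h1 : π ++ rest ∈ S.tree :=
          (self_similar hdom hτT hπτ hπτne hlasts rest).mpr (by rw [hsplit]; exact hmem)
        have hrestlen : (π ++ rest).length ≤ L := by
          rw [List.length_append, hπlen, hrest, List.length_drop]
          omega
        have h2 : π ++ rest ∈ S'.tree := ihL _ hrestlen h1
        have h3 : τ ++ rest ∈ S'.tree :=
          (self_similar hdom' hτT' hπτ hπτne hlasts rest).mp h2
        rwa [hsplit] at h3
  exact fun ρ => main ρ.length ρ le_rfl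

end Determination

open BuchiStrategy in
theorem absorption_dominant_determined_by_depth' {V : Type*} [Fintype V]
    (G : BuchiGame V) (v : V) :
    (∀ S S' : BuchiStrategy G v,
      S.Winning → S.AbsorptionDominant → S'.Winning → S'.AbsorptionDominant →
      {ρ ∈ S.tree | ρ.length ≤ Fintype.card V + 1} =
        {ρ ∈ S'.tree | ρ.length ≤ Fintype.card V + 1} →
      S.tree = S'.tree) := by
  intro S S' _ hdom _ hdom' hagree_set
  have hagree : ∀ ρ : List V, ρ.length ≤ Fintype.card V + 1 → (ρ ∈ S.tree ↔ ρ ∈ S'.tree) := by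
    intro ρ hρlen
    have := Set.ext_iff.1 hagree_set ρ
    simp only [Set.mem_setOf_eq] at this
    constructor
    · intro h; exact (this.1 ⟨h, hρlen⟩).1
    · intro h; exact (this.2 ⟨h, hρlen⟩).1
  have hagree' : ∀ ρ : List V, ρ.length ≤ Fintype.card V + 1 → (ρ ∈ S'.tree ↔ ρ ∈ S.tree) :=
    fun ρ h => (hagree ρ h).symm
  ext ρ
  exact ⟨fun h => determined_aux S S' hdom hdom' hagree ρ h,
    fun h => determined_aux S' S hdom' hdom hagree' ρ h⟩


open BuchiStrategy in
/-- In a finite Büchi game with `n` positions, every absorption-dominant winning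
strategy from `v` is uniquely determined by its restriction to nodes of depth
at most `n` in the tree unraveling; consequently there are only finitely many
absorption-dominant winning strategies from `v`. -/
theorem absorption_dominant_determined_by_depth {V : Type*} [Fintype V]
    (G : BuchiGame V) (v : V) :
    (∀ S S' : BuchiStrategy G v,
      S.Winning → S.AbsorptionDominant → S'.Winning → S'.AbsorptionDominant →
      {ρ ∈ S.tree | ρ.length ≤ Fintype.card V + 1} =
        {ρ ∈ S'.tree | ρ.length ≤ Fintype.card V + 1} →
      S.tree = S'.tree) ∧
    {T : Set (List V) | ∃ S : BuchiStrategy G v,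
      S.Winning ∧ S.AbsorptionDominant ∧ S.tree = T}.Finite := by
  constructor
  · exact absorption_dominant_determined_by_depth' G v
  · have hK : {l : List V | l.length ≤ Fintype.card V + 1}.Finite :=
      List.finite_length_le V (Fintype.card V + 1)
    apply Set.Finite.of_finite_image
      (f := fun T : Set (List V) => {ρ ∈ T | ρ.length ≤ Fintype.card V + 1})
    · apply Set.Finite.subset hK.finite_subsets
      rintro x ⟨T, hT, rfl⟩
      intro ρ hρ
      exact hρ.2
    · rintro T1 ⟨S1, hw1, hd1, rfl⟩ T2 ⟨S2, hw2, hd2, rfl⟩ heq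
      exact absorption_dominant_determined_by_depth' G v S1 S2 hw1 hd1 hw2 hd2 heq
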